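/- If a maximal outerplanar graph G is cut along a chord e into two induced subgraphs G_α and G_β each containing both endpoints of e, then for any two vertices x ∈ G_α and y ∈ G_β, every shortest path in G from x to y passes through an endpoint of e; consequently d_G(x,y) = min over endpoints w of e of (d_{G_α}(x,w) + d_{G_β}(w,y)). -/

import Mathlib

/-- Two chords of the convex polygon on vertices `0 < 1 < ⋯ < n-1`, given by their
sorted endpoint pairs `(a,b)` and `(c,d)`, cross each other. -/
def Crossing {n : ℕ} (a b c d : Fin n) : Prop :=
  (a < c ∧ c < b ∧ b < d) ∨ (c < a ∧ a < d ∧ d < b)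

/-- The cyclic successor of a vertex of `Fin n`. -/
def cycSucc {n : ℕ} (i : Fin n) : Fin n := ⟨(i.val + 1) % n, Nat.mod_lt _ i.pos⟩

/-- `G` is a maximal outerplanar graph (mop) whose outer Hamiltonian cycle is
`0, 1, …, n-1, 0`: it contains all cycle edges, its chords are pairwise
non-crossing (outerplanarity of the embedding), and no further chord can be
added without crossing an existing edge (maximality). -/
def IsMop {n : ℕ} (G : SimpleGraph (Fin n)) : Prop :=
  3 ≤ n ∧
  (∀ i : Fin n, G.Adj i (cycSucc i)) ∧
  (∀ a b c d : Fin n, a < b → c < d → G.Adj a b → G.Adj c d → ¬ Crossing a b c d) ∧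
  (∀ a b : Fin n, a < b → ¬ G.Adj a b →
    ∃ c d : Fin n, c < d ∧ G.Adj c d ∧ Crossing a b c d)

/-- The edge `{u,v}` (with `u < v`) is an internal edge (chord) of the mop on
`Fin n`, i.e. it is not one of the Hamiltonian cycle edges. -/
def IsChord {n : ℕ} (u v : Fin n) : Prop :=
  u.val + 1 < v.val ∧ ¬(u.val = 0 ∧ v.val = n - 1)

section Aux
variable {n : ℕ} {G : SimpleGraph (Fin n)} {u v : Fin n}

lemma side_lemma
    (h3 : ∀ a b c d : Fin n, a < b → c < d → G.Adj a b → G.Adj c d → ¬ Crossing a b c d)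
    (huv : u < v) (hadj : G.Adj u v) {a b : Fin n} (hab : G.Adj a b)
    (h1 : u < a) (h2 : a < v) : u ≤ b ∧ b ≤ v := by
  rcases lt_or_ge b u with hbu | hub
  · exact absurd (Or.inl ⟨hbu, h1, h2⟩) (h3 b a u v (hbu.trans h1) huv hab.symm hadj)
  · rcases le_or_gt b v with hbv | hvb
    · exact ⟨hub, hbv⟩
    · exact absurd (Or.inr ⟨h1, h2, hvb⟩) (h3 a b u v (h2.trans hvb) huv hab hadj)

lemma adj_of_succ (hcyc : ∀ i : Fin n, G.Adj i (cycSucc i)) {a b : Fin n}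
    (h : a.val + 1 = b.val) : G.Adj a b := by
  have h2 : cycSucc a = b := by
    apply Fin.ext
    show (a.val + 1) % n = b.val
    rw [h, Nat.mod_eq_of_lt b.isLt]
  exact h2 ▸ hcyc a

lemma hits
    (h3 : ∀ a b c d : Fin n, a < b → c < d → G.Adj a b → G.Adj c d → ¬ Crossing a b c d)
    (huv : u < v) (hadj : G.Adj u v) :
    ∀ {a y : Fin n} (p : G.Walk a y), (y ≤ u ∨ v ≤ y) → u ≤ a → a ≤ v →
      u ∈ p.support ∨ v ∈ p.support := by
  intro a y p
  induction p with
  | nil =>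
    intro hy h1 h2
    rcases hy with h | h
    · left; simp [le_antisymm h h1]
    · right; simp [le_antisymm h2 h]
  | @cons a b _ hab q ih =>
    intro hy h1 h2
    rcases h1.eq_or_lt with rfl | h1'
    · left; exact SimpleGraph.Walk.start_mem_support _
    · rcases h2.eq_or_lt with rfl | h2'
      · right; exact SimpleGraph.Walk.start_mem_support _
      · have hb := side_lemma h3 huv hadj hab h1' h2'
        rcases ih hy hb.1 hb.2 with h | h
        · left; simp [SimpleGraph.Walk.support_cons, h]
        · right; simp [SimpleGraph.Walk.support_cons, h]

end Aux

section Conn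
open SimpleGraph
variable {n : ℕ} {G : SimpleGraph (Fin n)} {u v : Fin n}

lemma climb (hcyc : ∀ i : Fin n, G.Adj i (cycSucc i)) (T : Set (Fin n)) :
    ∀ (d : ℕ) (a b : Fin n) (hab : a.val + d = b.val)
      (hseg : ∀ z : Fin n, a.val ≤ z.val → z.val ≤ b.val → z ∈ T),
      (G.induce T).Reachable ⟨a, hseg a le_rfl (by omega)⟩ ⟨b, hseg b (by omega) le_rfl⟩ := by
  intro d
  induction d with
  | zero =>
    intro a b hab hseg
    have h : a = b := Fin.ext (by omega)
    subst h
    exact Reachable.refl _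
  | succ d ih =>
    intro a b hab hseg
    have ha1 : a.val + 1 < n := by have := b.isLt; omega
    have hab' : a.val + 1 ≤ b.val := by omega
    have adj : G.Adj a ⟨a.val + 1, ha1⟩ := adj_of_succ hcyc rfl
    have step : (G.induce T).Adj ⟨a, hseg a le_rfl (by omega)⟩
        ⟨⟨a.val + 1, ha1⟩, hseg _ (Nat.le_succ _) hab'⟩ := adj
    exact step.reachable.trans
      (ih ⟨a.val + 1, ha1⟩ b (by show a.val + 1 + d = b.val; omega)
        (fun z h1 h2 => hseg z (le_trans (Nat.le_succ _) h1) h2))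

lemma gPre (hn : 3 ≤ n) (hcyc : ∀ i : Fin n, G.Adj i (cycSucc i)) : G.Preconnected := by
  have key : ∀ (d : ℕ) (a b : Fin n), a.val + d = b.val → G.Reachable a b := by
    intro d
    induction d with
    | zero => intro a b h; have : a = b := Fin.ext (by omega); subst this; exact Reachable.refl _
    | succ d ih =>
      intro a b h
      have ha1 : a.val + 1 < n := by have := b.isLt; omega
      exact (adj_of_succ hcyc (b := ⟨a.val + 1, ha1⟩) rfl).reachable.trans
        (ih ⟨a.val + 1, ha1⟩ b (by show a.val + 1 + d = b.val; omega))
  intro a b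
  rcases le_total a.val b.val with h | h
  · exact key (b.val - a.val) a b (by omega)
  · exact (key (a.val - b.val) b a (by omega)).symm

lemma alphaPre (hn : 3 ≤ n) (hcyc : ∀ i : Fin n, G.Adj i (cycSucc i)) (huv : u < v) :
    (G.induce {z : Fin n | u ≤ z ∧ z ≤ v}).Preconnected := by
  have reachU : ∀ (a : Fin n) (ha : a ∈ {z : Fin n | u ≤ z ∧ z ≤ v}),
      (G.induce {z : Fin n | u ≤ z ∧ z ≤ v}).Reachable ⟨u, ⟨le_refl u, le_of_lt huv⟩⟩ ⟨a, ha⟩ := by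
    intro a ha
    obtain ⟨h1, h2⟩ := ha
    exact climb hcyc {z : Fin n | u ≤ z ∧ z ≤ v} (a.val - u.val) u a
      (by have := Fin.le_def.mp h1; omega)
      (fun z hz1 hz2 => ⟨Fin.le_def.mpr hz1, Fin.le_def.mpr (le_trans hz2 (Fin.le_def.mp h2))⟩)
  intro ⟨a, ha⟩ ⟨b, hb⟩
  exact (reachU a ha).symm.trans (reachU b hb)

lemma betaPre (hn : 3 ≤ n) (hcyc : ∀ i : Fin n, G.Adj i (cycSucc i)) (huv : u < v) :
    (G.induce {z : Fin n | z ≤ u ∨ v ≤ z}).Preconnected := by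
  have reachU : ∀ (a : Fin n) (ha : a ∈ {z : Fin n | z ≤ u ∨ v ≤ z}),
      (G.induce {z : Fin n | z ≤ u ∨ v ≤ z}).Reachable ⟨a, ha⟩ ⟨u, Or.inl (le_refl u)⟩ := by
    intro a ha
    rcases ha with h | h
    · exact (climb hcyc {z : Fin n | z ≤ u ∨ v ≤ z} (u.val - a.val) a u
        (by have := Fin.le_def.mp h; omega)
        (fun z hz1 hz2 => Or.inl (Fin.le_def.mpr hz2)))
    · have hv := Fin.le_def.mp h
      have hlast : n - 1 < n := by omega
      have h0 : 0 < n := by omega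
      have c1 := climb hcyc {z : Fin n | z ≤ u ∨ v ≤ z} (n - 1 - a.val) a ⟨n - 1, hlast⟩
        (by show a.val + (n - 1 - a.val) = n - 1; have := a.isLt; omega)
        (fun z hz1 hz2 => Or.inr (Fin.le_def.mpr (le_trans hv hz1)))
      have adj0 : G.Adj ⟨n - 1, hlast⟩ ⟨0, h0⟩ := by
        have h2 : cycSucc (⟨n - 1, hlast⟩ : Fin n) = ⟨0, h0⟩ := by
          apply Fin.ext
          show (n - 1 + 1) % n = 0
          have he : n - 1 + 1 = n := by omega
          rw [he, Nat.mod_self]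
        exact h2 ▸ hcyc _
      have step : (G.induce {z : Fin n | z ≤ u ∨ v ≤ z}).Adj
          ⟨⟨n - 1, hlast⟩, Or.inr (Fin.le_def.mpr (by show v.val ≤ n - 1; have := v.isLt; omega))⟩
          ⟨⟨0, h0⟩, Or.inl (Fin.le_def.mpr (by show 0 ≤ u.val; omega))⟩ := adj0
      have c2 := climb hcyc {z : Fin n | z ≤ u ∨ v ≤ z} u.val ⟨0, h0⟩ u
        (by show 0 + u.val = u.val; omega)
        (fun z hz1 hz2 => Or.inl (Fin.le_def.mpr hz2))
      exact c1.trans (step.reachable.trans c2)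
  intro ⟨a, ha⟩ ⟨b, hb⟩
  exact (reachU a ha).trans (reachU b hb).symm

end Conn

section Lower
open SimpleGraph
variable {n : ℕ} {G : SimpleGraph (Fin n)} {u v : Fin n}

lemma lower_beta
    (h3 : ∀ a b c d : Fin n, a < b → c < d → G.Adj a b → G.Adj c d → ¬ Crossing a b c d)
    (huv : u < v) (hadj : G.Adj u v)
    (hpre : (G.induce {z : Fin n | z ≤ u ∨ v ≤ z}).Preconnected)
    {y : Fin n} (hy : y ∈ {z : Fin n | z ≤ u ∨ v ≤ z}) :
    ∀ m : ℕ,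
    (∀ (a : Fin n) (ha : a ∈ {z : Fin n | z ≤ u ∨ v ≤ z}) (r : G.Walk a y), r.length ≤ m →
      (G.induce {z : Fin n | z ≤ u ∨ v ≤ z}).dist ⟨a, ha⟩ ⟨y, hy⟩ ≤ r.length) ∧
    (∀ (b : Fin n), u < b → b < v → ∀ (q : G.Walk b y), q.length ≤ m →
      ∃ (w : Fin n) (hw : w ∈ {z : Fin n | z ≤ u ∨ v ≤ z}), (w = u ∨ w = v) ∧
        1 + (G.induce {z : Fin n | z ≤ u ∨ v ≤ z}).dist ⟨w, hw⟩ ⟨y, hy⟩ ≤ q.length) := by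
  have hconn : (G.induce {z : Fin n | z ≤ u ∨ v ≤ z}).Connected :=
    { preconnected := hpre, nonempty := ⟨⟨u, Or.inl (le_refl u)⟩⟩ }
  -- distance between any two of {u,v} is at most 1
  have hduv : ∀ (a w : Fin n) (ha : a ∈ {z : Fin n | z ≤ u ∨ v ≤ z})
      (hw : w ∈ {z : Fin n | z ≤ u ∨ v ≤ z}), (a = u ∨ a = v) → (w = u ∨ w = v) →
      (G.induce {z : Fin n | z ≤ u ∨ v ≤ z}).dist ⟨a, ha⟩ ⟨w, hw⟩ ≤ 1 := by
    intro a w ha hw hau hwu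
    by_cases haw : a = w
    · subst haw
      exact le_trans (le_of_eq SimpleGraph.dist_self) (Nat.zero_le 1)
    · have hadj' : (G.induce {z : Fin n | z ≤ u ∨ v ≤ z}).Adj ⟨a, ha⟩ ⟨w, hw⟩ := by
        rcases hau with rfl | rfl <;> rcases hwu with h | h
        · exact absurd h.symm haw
        · subst h; exact hadj
        · subst h; exact hadj.symm
        · exact absurd h.symm haw
      have h1 : (G.induce {z : Fin n | z ≤ u ∨ v ≤ z}).dist ⟨a, ha⟩ ⟨w, hw⟩ ≤ 1 :=
        SimpleGraph.dist_le hadj'.toWalk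
      exact h1
  intro m
  induction m with
  | zero =>
    constructor
    · intro a ha r hr
      cases r with
      | nil => exact le_of_eq SimpleGraph.dist_self
      | cons h q => simp [Walk.length_cons] at hr
    · intro b hb1 hb2 q hq
      cases q with
      | nil =>
        rcases hy with h | h
        · exact absurd (lt_of_lt_of_le hb1 h) (lt_irrefl u)
        · exact absurd (lt_of_le_of_lt h hb2) (lt_irrefl v)
      | cons h q => simp [Walk.length_cons] at hq
  | succ m ih =>
    obtain ⟨ih1, ih2⟩ := ih
    constructor
    · intro a ha r hr
      cases r with
      | nil => exact le_of_eq SimpleGraph.dist_self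
      | @cons _ b _ hab r' =>
        have hr' : r'.length ≤ m := by simp [Walk.length_cons] at hr; omega
        by_cases hb : b ∈ {z : Fin n | z ≤ u ∨ v ≤ z}
        · have hdb := ih1 b hb r' hr'
          have adjT : (G.induce {z : Fin n | z ≤ u ∨ v ≤ z}).Adj ⟨a, ha⟩ ⟨b, hb⟩ := hab
          have htri := hconn.dist_triangle (v := ⟨b, hb⟩)
            (u := (⟨a, ha⟩ : {z : Fin n | z ≤ u ∨ v ≤ z})) (w := ⟨y, hy⟩)
          have h1 : (G.induce {z : Fin n | z ≤ u ∨ v ≤ z}).dist ⟨a, ha⟩ ⟨b, hb⟩ ≤ 1 :=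
            SimpleGraph.dist_le adjT.toWalk
          simp [Walk.length_cons]
          omega
        · have hb1 : u < b := by
            rcases lt_or_ge u b with h | h
            · exact h
            · exact absurd (Or.inl h) hb
          have hb2 : b < v := by
            rcases lt_or_ge b v with h | h
            · exact h
            · exact absurd (Or.inr h) hb
          have haα : u ≤ a ∧ a ≤ v := side_lemma h3 huv hadj hab.symm hb1 hb2
          have hau : a = u ∨ a = v := by
            rcases ha with h | h
            · exact Or.inl (le_antisymm h haα.1)
            · exact Or.inr (le_antisymm haα.2 h)
          obtain ⟨w, hw, hwuv, hdw⟩ := ih2 b hb1 hb2 r' hr'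
          have hdaw := hduv a w ha hw hau hwuv
          have htri := hconn.dist_triangle (v := ⟨w, hw⟩)
            (u := (⟨a, ha⟩ : {z : Fin n | z ≤ u ∨ v ≤ z})) (w := ⟨y, hy⟩)
          simp [Walk.length_cons]
          omega
    · intro b hb1 hb2 q hq
      cases q with
      | nil =>
        rcases hy with h | h
        · exact absurd (lt_of_lt_of_le hb1 h) (lt_irrefl u)
        · exact absurd (lt_of_le_of_lt h hb2) (lt_irrefl v)
      | @cons _ c _ hbc q' =>
        have hq' : q'.length ≤ m := by simp [Walk.length_cons] at hq; omega
        have hcα : u ≤ c ∧ c ≤ v := side_lemma h3 huv hadj hbc hb1 hb2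
        by_cases hcu : c = u
        · subst hcu
          refine ⟨c, Or.inl (le_refl c), Or.inl rfl, ?_⟩
          have := ih1 c (Or.inl (le_refl c)) q' hq'
          simp [Walk.length_cons]
          omega
        · by_cases hcv : c = v
          · subst hcv
            refine ⟨c, Or.inr (le_refl c), Or.inr rfl, ?_⟩
            have := ih1 c (Or.inr (le_refl c)) q' hq'
            simp [Walk.length_cons]
            omega
          · have hc1 : u < c := lt_of_le_of_ne hcα.1 (Ne.symm hcu)
            have hc2 : c < v := lt_of_le_of_ne hcα.2 hcv
            obtain ⟨w, hw, hwuv, hd⟩ := ih2 c hc1 hc2 q' hq'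
            exact ⟨w, hw, hwuv, by simp [Walk.length_cons]; omega⟩

end Lower

section LowerA
open SimpleGraph
variable {n : ℕ} {G : SimpleGraph (Fin n)} {u v : Fin n}

lemma lower_alpha
    (h3 : ∀ a b c d : Fin n, a < b → c < d → G.Adj a b → G.Adj c d → ¬ Crossing a b c d)
    (huv : u < v) (hadj : G.Adj u v)
    (hpre : (G.induce {z : Fin n | u ≤ z ∧ z ≤ v}).Preconnected)
    {t : Fin n} (ht : t ∈ {z : Fin n | u ≤ z ∧ z ≤ v}) :
    ∀ m : ℕ,
    (∀ (a : Fin n) (ha : a ∈ {z : Fin n | u ≤ z ∧ z ≤ v}) (r : G.Walk a t), r.length ≤ m →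
      (G.induce {z : Fin n | u ≤ z ∧ z ≤ v}).dist ⟨a, ha⟩ ⟨t, ht⟩ ≤ r.length) ∧
    (∀ (b : Fin n), (b < u ∨ v < b) → ∀ (q : G.Walk b t), q.length ≤ m →
      ∃ (w : Fin n) (hw : w ∈ {z : Fin n | u ≤ z ∧ z ≤ v}), (w = u ∨ w = v) ∧
        1 + (G.induce {z : Fin n | u ≤ z ∧ z ≤ v}).dist ⟨w, hw⟩ ⟨t, ht⟩ ≤ q.length) := by
  have hconn : (G.induce {z : Fin n | u ≤ z ∧ z ≤ v}).Connected :=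
    { preconnected := hpre, nonempty := ⟨⟨u, ⟨le_refl u, le_of_lt huv⟩⟩⟩ }
  have huS : u ∈ {z : Fin n | u ≤ z ∧ z ≤ v} := ⟨le_refl u, le_of_lt huv⟩
  have hvS : v ∈ {z : Fin n | u ≤ z ∧ z ≤ v} := ⟨le_of_lt huv, le_refl v⟩
  have hduv : ∀ (a w : Fin n) (ha : a ∈ {z : Fin n | u ≤ z ∧ z ≤ v})
      (hw : w ∈ {z : Fin n | u ≤ z ∧ z ≤ v}), (a = u ∨ a = v) → (w = u ∨ w = v) →
      (G.induce {z : Fin n | u ≤ z ∧ z ≤ v}).dist ⟨a, ha⟩ ⟨w, hw⟩ ≤ 1 := by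
    intro a w ha hw hau hwu
    by_cases haw : a = w
    · subst haw
      exact le_trans (le_of_eq SimpleGraph.dist_self) (Nat.zero_le 1)
    · have hadj' : (G.induce {z : Fin n | u ≤ z ∧ z ≤ v}).Adj ⟨a, ha⟩ ⟨w, hw⟩ := by
        rcases hau with rfl | rfl <;> rcases hwu with h | h
        · exact absurd h.symm haw
        · subst h; exact hadj
        · subst h; exact hadj.symm
        · exact absurd h.symm haw
      have h1 : (G.induce {z : Fin n | u ≤ z ∧ z ≤ v}).dist ⟨a, ha⟩ ⟨w, hw⟩ ≤ 1 :=
        SimpleGraph.dist_le hadj'.toWalk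
      exact h1
  -- b in strict beta-interior cannot equal t
  have hbt : ∀ b : Fin n, (b < u ∨ v < b) → b ≠ t := by
    intro b hb hbt
    subst hbt
    rcases hb with h | h
    · exact absurd (lt_of_lt_of_le h ht.1) (lt_irrefl b)
    · exact absurd (lt_of_le_of_lt ht.2 h) (lt_irrefl b)
  intro m
  induction m with
  | zero =>
    constructor
    · intro a ha r hr
      cases r with
      | nil => exact le_of_eq SimpleGraph.dist_self
      | cons h q => simp [Walk.length_cons] at hr
    · intro b hb q hq
      cases q with
      | nil => exact absurd rfl (hbt t hb)
      | cons h q => simp [Walk.length_cons] at hq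
  | succ m ih =>
    obtain ⟨ih1, ih2⟩ := ih
    constructor
    · intro a ha r hr
      cases r with
      | nil => exact le_of_eq SimpleGraph.dist_self
      | @cons _ b _ hab r' =>
        have hr' : r'.length ≤ m := by simp [Walk.length_cons] at hr; omega
        by_cases hb : b ∈ {z : Fin n | u ≤ z ∧ z ≤ v}
        · have hdb := ih1 b hb r' hr'
          have adjT : (G.induce {z : Fin n | u ≤ z ∧ z ≤ v}).Adj ⟨a, ha⟩ ⟨b, hb⟩ := hab
          have htri := hconn.dist_triangle (v := ⟨b, hb⟩)
            (u := (⟨a, ha⟩ : {z : Fin n | u ≤ z ∧ z ≤ v})) (w := ⟨t, ht⟩)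
          have h1 : (G.induce {z : Fin n | u ≤ z ∧ z ≤ v}).dist ⟨a, ha⟩ ⟨b, hb⟩ ≤ 1 :=
            SimpleGraph.dist_le adjT.toWalk
          simp [Walk.length_cons]
          omega
        · -- b is in the strict beta interior
          have hb' : b < u ∨ v < b := by
            rcases lt_or_ge b u with h | h
            · exact Or.inl h
            · rcases lt_or_ge v b with h' | h'
              · exact Or.inr h'
              · exact absurd ⟨h, h'⟩ hb
          -- a must be u or v
          have hau : a = u ∨ a = v := by
            by_cases hau' : a = u
            · exact Or.inl hau'
            · by_cases hav : a = v
              · exact Or.inr hav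
              · have ha1 : u < a := lt_of_le_of_ne ha.1 (Ne.symm hau')
                have ha2 : a < v := lt_of_le_of_ne ha.2 hav
                have := side_lemma h3 huv hadj hab ha1 ha2
                rcases hb' with h | h
                · exact absurd (lt_of_lt_of_le h this.1) (lt_irrefl b)
                · exact absurd (lt_of_le_of_lt this.2 h) (lt_irrefl b)
          obtain ⟨w, hw, hwuv, hdw⟩ := ih2 b hb' r' hr'
          have hdaw := hduv a w ha hw hau hwuv
          have htri := hconn.dist_triangle (v := ⟨w, hw⟩)
            (u := (⟨a, ha⟩ : {z : Fin n | u ≤ z ∧ z ≤ v})) (w := ⟨t, ht⟩)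
          simp [Walk.length_cons]
          omega
    · intro b hb q hq
      cases q with
      | nil => exact absurd rfl (hbt t hb)
      | @cons _ c _ hbc q' =>
        have hq' : q'.length ≤ m := by simp [Walk.length_cons] at hq; omega
        -- c must be in beta (closure): c ≤ u or v ≤ c
        have hcβ : c ≤ u ∨ v ≤ c := by
          rcases le_or_gt c u with h | h
          · exact Or.inl h
          · rcases le_or_gt v c with h' | h'
            · exact Or.inr h'
            · have := side_lemma h3 huv hadj hbc.symm h h'
              rcases hb with hh | hh
              · exact absurd (lt_of_lt_of_le hh this.1) (lt_irrefl b)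
              · exact absurd (lt_of_le_of_lt this.2 hh) (lt_irrefl b)
        by_cases hcu : c = u
        · subst hcu
          refine ⟨c, huS, Or.inl rfl, ?_⟩
          have := ih1 c huS q' hq'
          simp [Walk.length_cons]
          omega
        · by_cases hcv : c = v
          · subst hcv
            refine ⟨c, hvS, Or.inr rfl, ?_⟩
            have := ih1 c hvS q' hq'
            simp [Walk.length_cons]
            omega
          · have hc' : c < u ∨ v < c := by
              rcases hcβ with h | h
              · exact Or.inl (lt_of_le_of_ne h hcu)
              · exact Or.inr (lt_of_le_of_ne h (fun e => hcv e.symm))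
            obtain ⟨w, hw, hwuv, hd⟩ := ih2 c hc' q' hq'
            exact ⟨w, hw, hwuv, by simp [Walk.length_cons]; omega⟩

end LowerA


open SimpleGraph

/-- If a mop `G` is cut along a chord `uv` into the subgraphs induced by the two cycle
intervals (each containing `u` and `v`), then for `x` in one side and `y` in the
other, every shortest path from `x` to `y` passes through `u` or `v`, and
`d_G(x,y)` is the minimum over the endpoints `w ∈ {u,v}` of
`d_{G_α}(x,w) + d_{G_β}(w,y)`. -/
theorem stmt_10 {n : ℕ} (G : SimpleGraph (Fin n)) (hG : IsMop G)
    (u v : Fin n) (huv : u < v) (hadj : G.Adj u v) (hchord : IsChord u v)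
    (x y : Fin n) (hx : x ∈ {z : Fin n | u ≤ z ∧ z ≤ v})
    (hy : y ∈ {z : Fin n | z ≤ u ∨ v ≤ z}) :
    (∀ p : G.Walk x y, p.length = G.dist x y → u ∈ p.support ∨ v ∈ p.support) ∧
    G.dist x y =
      min ((G.induce {z : Fin n | u ≤ z ∧ z ≤ v}).dist ⟨x, hx⟩ ⟨u, ⟨le_refl u, le_of_lt huv⟩⟩ +
           (G.induce {z : Fin n | z ≤ u ∨ v ≤ z}).dist ⟨u, Or.inl (le_refl u)⟩ ⟨y, hy⟩)
          ((G.induce {z : Fin n | u ≤ z ∧ z ≤ v}).dist ⟨x, hx⟩ ⟨v, ⟨le_of_lt huv, le_refl v⟩⟩ +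
           (G.induce {z : Fin n | z ≤ u ∨ v ≤ z}).dist ⟨v, Or.inr (le_refl v)⟩ ⟨y, hy⟩) := by
  obtain ⟨hn, hcyc, h3, _⟩ := hG
  have hpreS := alphaPre hn hcyc huv
  have hpreT := betaPre hn hcyc huv
  have hgpre := gPre hn hcyc
  have huS : u ∈ {z : Fin n | u ≤ z ∧ z ≤ v} := ⟨le_refl u, le_of_lt huv⟩
  have hvS : v ∈ {z : Fin n | u ≤ z ∧ z ≤ v} := ⟨le_of_lt huv, le_refl v⟩
  have huT : u ∈ {z : Fin n | z ≤ u ∨ v ≤ z} := Or.inl (le_refl u)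
  have hvT : v ∈ {z : Fin n | z ≤ u ∨ v ≤ z} := Or.inr (le_refl v)
  constructor
  · intro p _
    exact hits h3 huv hadj p hy hx.1 hx.2
  · apply le_antisymm
    · -- upper bound: build explicit walks through u and through v
      apply le_min
      · obtain ⟨pα, hpα⟩ := (hpreS ⟨x, hx⟩ ⟨u, huS⟩).exists_walk_length_eq_dist
        obtain ⟨pβ, hpβ⟩ := (hpreT ⟨u, huT⟩ ⟨y, hy⟩).exists_walk_length_eq_dist
        have hw : G.dist x y ≤
            ((pα.map (SimpleGraph.Embedding.induce _).toHom).append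
             (pβ.map (SimpleGraph.Embedding.induce _).toHom)).length :=
          SimpleGraph.dist_le _
        have hw2 : G.dist x y ≤ pα.length + pβ.length := hw.trans (le_of_eq ((Walk.length_append _ _).trans
          (congrArg₂ (· + ·) (Walk.length_map _ _) (Walk.length_map _ _))))
        omega
      · obtain ⟨pα, hpα⟩ := (hpreS ⟨x, hx⟩ ⟨v, hvS⟩).exists_walk_length_eq_dist
        obtain ⟨pβ, hpβ⟩ := (hpreT ⟨v, hvT⟩ ⟨y, hy⟩).exists_walk_length_eq_dist
        have hw : G.dist x y ≤
            ((pα.map (SimpleGraph.Embedding.induce _).toHom).append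
             (pβ.map (SimpleGraph.Embedding.induce _).toHom)).length :=
          SimpleGraph.dist_le _
        have hw2 : G.dist x y ≤ pα.length + pβ.length := hw.trans (le_of_eq ((Walk.length_append _ _).trans
          (congrArg₂ (· + ·) (Walk.length_map _ _) (Walk.length_map _ _))))
        omega
    · -- lower bound: split a shortest walk at u or v
      obtain ⟨p, hp⟩ := (hgpre x y).exists_walk_length_eq_dist
      have hsplit : ∀ (w : Fin n) (hwS : w ∈ {z : Fin n | u ≤ z ∧ z ≤ v})
          (hwT : w ∈ {z : Fin n | z ≤ u ∨ v ≤ z}) (hwp : w ∈ p.support),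
          (G.induce {z : Fin n | u ≤ z ∧ z ≤ v}).dist ⟨x, hx⟩ ⟨w, hwS⟩ +
          (G.induce {z : Fin n | z ≤ u ∨ v ≤ z}).dist ⟨w, hwT⟩ ⟨y, hy⟩ ≤ G.dist x y := by
        intro w hwS hwT hwp
        have hlen : (p.takeUntil w hwp).length + (p.dropUntil w hwp).length = p.length := by
          have := congrArg Walk.length (p.take_spec hwp)
          rwa [Walk.length_append] at this
        have h1 := (lower_alpha h3 huv hadj hpreS hwS (p.takeUntil w hwp).length).1
          x hx (p.takeUntil w hwp) le_rfl
        have h2 := (lower_beta h3 huv hadj hpreT hy (p.dropUntil w hwp).length).1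
          w hwT (p.dropUntil w hwp) le_rfl
        omega
      rcases hits h3 huv hadj p hy hx.1 hx.2 with hw | hw
      · exact le_trans (min_le_left _ _) (hsplit u huS huT hw)
      · exact le_trans (min_le_right _ _) (hsplit v hvS hvT hw)
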